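/- For the Budapest biquandle on a left module X over the quaternions ℍ, defined by a^b = j·a + (1+i)·b and a_b = −j·a + (1+i)·b, the map S(a,b) = (b^a, a_b) satisfies the set-theoretic Yang–Baxter equation S₁S₂S₁ = S₂S₁S₂. -/

import Mathlib

/-- The Budapest biquandle `a^b = j·a + (1+i)·b`, `a_b = -j·a + (1+i)·b` on a left
module `X` over the quaternions `ℍ` satisfies the set-theoretic Yang–Baxter equation
`S₁S₂S₁ = S₂S₁S₂`. -/
theorem stmt3 {X : Type*} [AddCommGroup X] [Module (Quaternion ℝ) X]
    (i j : Quaternion ℝ) (hi : i = ⟨0, 1, 0, 0⟩) (hj : j = ⟨0, 0, 1, 0⟩)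
    (up down : X → X → X)
    (hup : ∀ a b : X, up a b = j • a + (1 + i) • b)
    (hdown : ∀ a b : X, down a b = -(j • a) + (1 + i) • b)
    (S₁ S₂ : X × X × X → X × X × X)
    (hS₁ : ∀ a b c : X, S₁ (a, b, c) = (up b a, down a b, c))
    (hS₂ : ∀ a b c : X, S₂ (a, b, c) = (a, up c b, down b c)) :
    S₁ ∘ S₂ ∘ S₁ = S₂ ∘ S₁ ∘ S₂ := by
  have hii' : i * i = -1 := by ext <;> simp only [Quaternion.re_mul, Quaternion.imI_mul, Quaternion.imJ_mul, Quaternion.imK_mul, Quaternion.re_neg, Quaternion.imI_neg, Quaternion.imJ_neg, Quaternion.imK_neg, Quaternion.re_one, Quaternion.imI_one, Quaternion.imJ_one, Quaternion.imK_one] <;> simp [hi]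
  have hjj' : j * j = -1 := by ext <;> simp only [Quaternion.re_mul, Quaternion.imI_mul, Quaternion.imJ_mul, Quaternion.imK_mul, Quaternion.re_neg, Quaternion.imI_neg, Quaternion.imJ_neg, Quaternion.imK_neg, Quaternion.re_one, Quaternion.imI_one, Quaternion.imJ_one, Quaternion.imK_one] <;> simp [hj]
  have hji' : j * i = -(i * j) := by ext <;> simp only [Quaternion.re_mul, Quaternion.imI_mul, Quaternion.imJ_mul, Quaternion.imK_mul, Quaternion.re_neg, Quaternion.imI_neg, Quaternion.imJ_neg, Quaternion.imK_neg, Quaternion.re_one, Quaternion.imI_one, Quaternion.imJ_one, Quaternion.imK_one] <;> simp [hi, hj]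
  have hii : ∀ x : X, i • i • x = -x := fun x => by
    rw [smul_smul, hii', neg_smul, one_smul]
  have hjj : ∀ x : X, j • j • x = -x := fun x => by
    rw [smul_smul, hjj', neg_smul, one_smul]
  have hji : ∀ x : X, j • i • x = -(i • j • x) := fun x => by
    rw [smul_smul, smul_smul, hji', neg_smul]
  funext ⟨a, b, c⟩
  simp only [Function.comp_apply, hS₁, hS₂, hup, hdown, add_smul, one_smul, smul_add,
    smul_neg, neg_add_rev, neg_neg, hii, hjj, hji, Prod.mk.injEq]
  refine ⟨?_, ?_, ?_⟩ <;> abel
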